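/- Let Z be a square-integrable real-valued random variable on a probability space. Then for every z ∈ ℝ with P[Z ≤ z] > 0 and P[Z ≥ z] > 0, one has |E[Z] − z| ≤ √( Var(Z) / min{P[Z ≤ z], P[Z ≥ z], 1/2} ). -/

import Mathlib

open MeasureTheory ProbabilityTheory

lemma stmt1_aux {Ω : Type*} [MeasureSpace Ω] [IsProbabilityMeasure (ℙ : Measure Ω)]
    (Z : Ω → ℝ) (hZ : MemLp Z 2 ℙ) (hm : Measurable Z) (z : ℝ)
    (h1 : 0 < (ℙ {ω | Z ω ≤ z}).toReal) (h2 : 0 < (ℙ {ω | z ≤ Z ω}).toReal) :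
    |(∫ ω, Z ω) - z| ≤
      Real.sqrt (variance Z ℙ /
        min (min (ℙ {ω | Z ω ≤ z}).toReal (ℙ {ω | z ≤ Z ω}).toReal) (1 / 2)) := by
  set μ := ∫ ω, Z ω with hμdef
  set a := (ℙ {ω | Z ω ≤ z}).toReal with ha
  set b := (ℙ {ω | z ≤ Z ω}).toReal with hb
  set p := min (min a b) (1/2) with hp
  have hppos : 0 < p := lt_min (lt_min h1 h2) (by norm_num)
  have hg : Integrable (fun ω => (Z ω - μ)^2) ℙ := (hZ.sub (memLp_const μ)).integrable_sq
  have hvar : variance Z ℙ = ∫ ω, (Z ω - μ)^2 := by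
    rw [variance_eq_integral hZ.aemeasurable]
  apply Real.le_sqrt_of_sq_le
  rw [le_div_iff₀ hppos]
  -- key : bound via a set
  have key : ∀ s : Set Ω, MeasurableSet s → (∀ ω ∈ s, |μ - z|^2 ≤ (Z ω - μ)^2) →
      |μ - z|^2 * (ℙ s).toReal ≤ variance Z ℙ := by
    intro s hs hbound
    calc |μ - z|^2 * (ℙ s).toReal ≤ ∫ ω in s, (Z ω - μ)^2 :=
          setIntegral_ge_of_const_le_real hs (measure_ne_top _ _) hbound hg.integrableOn
      _ ≤ ∫ ω, (Z ω - μ)^2 :=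
          setIntegral_le_integral hg (Filter.Eventually.of_forall fun ω => sq_nonneg _)
      _ = variance Z ℙ := hvar.symm
  rcases le_total μ z with hcase | hcase
  · have hkey := key {ω | z ≤ Z ω} (measurableSet_le measurable_const hm)
      (fun ω hω => by
        have : z ≤ Z ω := hω
        have h1 : |μ - z|^2 = (z - μ)^2 := by rw [sq_abs, ← neg_sub, neg_sq]
        rw [h1]
        exact sq_le_sq' (by linarith) (by linarith))
    have hpb : p ≤ b := le_trans (min_le_left _ _) (min_le_right _ _)
    calc |μ - z|^2 * p ≤ |μ - z|^2 * b :=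
          mul_le_mul_of_nonneg_left hpb (sq_nonneg _)
      _ ≤ variance Z ℙ := hkey
  · have hkey := key {ω | Z ω ≤ z} (measurableSet_le hm measurable_const)
      (fun ω hω => by
        have : Z ω ≤ z := hω
        have h2 : (Z ω - μ)^2 = (μ - Z ω)^2 := by ring
        rw [sq_abs, h2]
        exact sq_le_sq' (by linarith) (by linarith))
    have hpa : p ≤ a := le_trans (min_le_left _ _) (min_le_left _ _)
    calc |μ - z|^2 * p ≤ |μ - z|^2 * a :=
          mul_le_mul_of_nonneg_left hpa (sq_nonneg _)
      _ ≤ variance Z ℙ := hkey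

/-- For a square-integrable real random variable `Z` and any `z : ℝ` with
`P[Z ≤ z] > 0` and `P[Z ≥ z] > 0`,
`|E[Z] − z| ≤ √( Var(Z) / min{P[Z ≤ z], P[Z ≥ z], 1/2} )`. -/
theorem stmt1 {Ω : Type*} [MeasureSpace Ω] [IsProbabilityMeasure (ℙ : Measure Ω)]
    (Z : Ω → ℝ) (hZ : MemLp Z 2 ℙ) :
    ∀ z : ℝ, 0 < (ℙ {ω | Z ω ≤ z}).toReal → 0 < (ℙ {ω | z ≤ Z ω}).toReal →
      |(∫ ω, Z ω) - z| ≤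
        Real.sqrt (variance Z ℙ /
          min (min (ℙ {ω | Z ω ≤ z}).toReal (ℙ {ω | z ≤ Z ω}).toReal) (1 / 2)) := by
  intro z h1 h2
  set Z' := hZ.aestronglyMeasurable.mk Z with hZ'def
  have hae : Z =ᵐ[ℙ] Z' := hZ.aestronglyMeasurable.ae_eq_mk
  have hm' : Measurable Z' := hZ.aestronglyMeasurable.stronglyMeasurable_mk.measurable
  have hZ' : MemLp Z' 2 ℙ := hZ.ae_eq hae
  have hsle : ℙ {ω | Z ω ≤ z} = ℙ {ω | Z' ω ≤ z} :=
    measure_congr (hae.mono fun ω h => by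
      exact congrArg (fun t => t ≤ z) h)
  have hsge : ℙ {ω | z ≤ Z ω} = ℙ {ω | z ≤ Z' ω} :=
    measure_congr (hae.mono fun ω h => by
      exact congrArg (fun t => z ≤ t) h)
  have hint : (∫ ω, Z ω) = ∫ ω, Z' ω := integral_congr_ae hae
  have hvar : variance Z ℙ = variance Z' ℙ := by
    rw [variance_eq_integral hZ.aemeasurable, variance_eq_integral hZ'.aemeasurable]
    refine integral_congr_ae (hae.mono fun ω h => ?_)
    simp [h, hint]
  rw [hint, hsle, hsge, hvar]
  exact stmt1_aux Z' hZ' hm' z (hsle ▸ h1) (hsge ▸ h2)
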